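/- Let (η_t) be a positive nonincreasing sequence with η_t ≤ 1/(2C) for C > 0, and suppose nonnegative reals b_t and a_t (with a_1 = 0) satisfy a_{t+1} − a_t ≤ 2η_t(Cη_t −1) b_t + η_t/2 + 2η_t² A. Then ∑_{k=1}^t η_k² b_k ≤ (A/C + 1/2) ∑_{k=1}^t η_k². -/

import Mathlib

theorem stmt_7 (C A : ℝ) (hC : 0 < C) (hA : 0 ≤ A)
    (a b η : ℕ → ℝ)
    (ha : ∀ t, 1 ≤ t → 0 ≤ a t) (hb : ∀ t, 1 ≤ t → 0 ≤ b t)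
    (hη : ∀ t, 1 ≤ t → 0 < η t) (hmono : ∀ t, 1 ≤ t → η (t + 1) ≤ η t)
    (hbound : ∀ t, 1 ≤ t → η t ≤ 1 / (2 * C))
    (hrec : ∀ t, 1 ≤ t →
      a (t + 1) - a t ≤ 2 * η t * (C * η t - 1) * b t + η t / 2 + 2 * η t ^ 2 * A)
    (ha1 : a 1 = 0) :
    ∀ t, 1 ≤ t →
      ∑ k ∈ Finset.Icc 1 t, η k ^ 2 * b k ≤ (A / C + 1 / 2) * ∑ k ∈ Finset.Icc 1 t, η k ^ 2 := by
  -- per-step inequality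
  have step : ∀ t, 1 ≤ t →
      η t ^ 2 * b t ≤ η t * a t - η t * a (t + 1) + (A / C + 1 / 2) * η t ^ 2 := by
    intro t ht
    have hηt := hη t ht
    have hbt := hb t ht
    have hbd := hbound t ht
    have hr := hrec t ht
    have h1 : 2 * C * η t ≤ 1 := by
      rw [div_eq_inv_mul] at hbd
      calc 2 * C * η t ≤ 2 * C * ((2 * C)⁻¹ * 1) := by
            apply mul_le_mul_of_nonneg_left (by simpa using hbd) (by positivity)
        _ = 1 := by field_simp
    -- 2η(Cη−1)b ≤ −η b
    have h2 : 2 * η t * (C * η t - 1) * b t ≤ - (η t * b t) := by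
      nlinarith [mul_nonneg hηt.le hbt, mul_nonneg (mul_nonneg hηt.le hbt) hbt]
    -- η b ≤ a t − a (t+1) + η/2 + 2η²A
    have h3 : η t * b t ≤ a t - a (t + 1) + η t / 2 + 2 * η t ^ 2 * A := by linarith
    have h4 : 2 * η t * A ≤ A / C := by
      rw [div_eq_inv_mul]
      have : η t ≤ (2 * C)⁻¹ := by simpa [div_eq_inv_mul] using hbd
      calc 2 * η t * A ≤ 2 * (2 * C)⁻¹ * A := by nlinarith
        _ = C⁻¹ * A := by field_simp
    -- multiply h3 by η t
    have h5 : η t * (η t * b t) ≤ η t * (a t - a (t + 1) + η t / 2 + 2 * η t ^ 2 * A) :=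
      mul_le_mul_of_nonneg_left h3 hηt.le
    have h6 : η t * (2 * η t ^ 2 * A) = η t ^ 2 * (2 * η t * A) := by ring
    have h7 : η t ^ 2 * (2 * η t * A) ≤ η t ^ 2 * (A / C) :=
      mul_le_mul_of_nonneg_left h4 (by positivity)
    nlinarith
  -- strengthened claim
  have main : ∀ t, 1 ≤ t →
      ∑ k ∈ Finset.Icc 1 t, η k ^ 2 * b k + η t * a (t + 1)
        ≤ (A / C + 1 / 2) * ∑ k ∈ Finset.Icc 1 t, η k ^ 2 := by
    intro t ht
    induction t with
    | zero => omega
    | succ n ih =>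
      rcases Nat.eq_or_lt_of_le ht with h | h
      · -- n + 1 = 1, i.e. n = 0
        have hn : n = 0 := by omega
        subst hn
        simp only [Finset.Icc_self, Finset.sum_singleton]
        have := step 1 le_rfl
        rw [ha1] at this
        linarith [this]
      · have hn : 1 ≤ n := by omega
        have ihn := ih hn
        rw [Finset.sum_Icc_succ_top (by omega : 1 ≤ n + 1),
            Finset.sum_Icc_succ_top (by omega : 1 ≤ n + 1)]
        have hs := step (n + 1) (by omega)
        have hmon : η (n + 1) * a (n + 1) ≤ η n * a (n + 1) :=
          mul_le_mul_of_nonneg_right (hmono n hn) (ha (n + 1) (by omega))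
        have ring1 : (A / C + 1 / 2) * (∑ k ∈ Finset.Icc 1 n, η k ^ 2 + η (n + 1) ^ 2)
            = (A / C + 1 / 2) * ∑ k ∈ Finset.Icc 1 n, η k ^ 2
              + (A / C + 1 / 2) * η (n + 1) ^ 2 := by ring
        rw [ring1]
        linarith
  intro t ht
  have := main t ht
  have hpos : 0 ≤ η t * a (t + 1) :=
    mul_nonneg (hη t ht).le (ha (t + 1) (by omega))
  linarith
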